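/- arXiv:1803.04280 — 2 statements merged into one kernel-verified Lean document; each statement's English description precedes it below -/
import Mathlib

section
/- Let q ≥ 2 be an integer and let θ be an integer such that either gcd(θ, q) = 1 or q divides θ. Then the map n ↦ w_q(n) + θ·n is uniformly distributed modulo q; that is, for every integer x, the limit lim_{N→∞} (1/N)·|{n < N : w_q(n) + θ·n ≡ x (mod q)}| exists and equals 1/q. -/
open Filter

/-- `vq q n` is the `q`-adic valuation: `0` if `n = 0`, and otherwise the
largest `k` such that `q ^ k` divides `n`. -/
noncomputable def vq (q n : ℕ) : ℕ := if n = 0 then 0 else sSup {k : ℕ | q ^ k ∣ n}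

/-- `wq q n = ∑_{i=0}^n vq q i`. -/
noncomputable def wq (q n : ℕ) : ℕ := ∑ i ∈ Finset.range (n + 1), vq q i

lemma vq_bdd {q n : ℕ} (hq : 2 ≤ q) (hn : n ≠ 0) : BddAbove {k : ℕ | q ^ k ∣ n} := by
  refine ⟨n, fun k hk => ?_⟩
  have := Nat.le_of_dvd (Nat.pos_of_ne_zero hn) hk
  have h2 : k < 2 ^ k := Nat.lt_two_pow_self
  have h3 : 2 ^ k ≤ q ^ k := Nat.pow_le_pow_left hq k
  omega

lemma vq_eq {q n : ℕ} (hq : 2 ≤ q) (hn : n ≠ 0) {k : ℕ} (h1 : q ^ k ∣ n)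
    (h2 : ¬ q ^ (k+1) ∣ n) : vq q n = k := by
  rw [vq, if_neg hn]
  apply le_antisymm
  · apply csSup_le ⟨0, by simpa using Nat.one_dvd n⟩
    intro j hj
    by_contra hjk
    exact h2 ((pow_dvd_pow q (Nat.succ_le_of_lt (lt_of_not_ge hjk))).trans hj)
  · exact le_csSup (vq_bdd hq hn) h1

lemma vq_spec {q n : ℕ} (hq : 2 ≤ q) (hn : n ≠ 0) :
    q ^ (vq q n) ∣ n ∧ ¬ q ^ (vq q n + 1) ∣ n := by
  have hne : (0:ℕ) ∈ {k : ℕ | q ^ k ∣ n} := by simpa using Nat.one_dvd n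
  have hmem := Nat.sSup_mem ⟨0, hne⟩ (vq_bdd hq hn)
  constructor
  · rw [vq, if_neg hn]; exact hmem
  · intro h
    have : vq q n + 1 ≤ vq q n := by
      rw [vq, if_neg hn] at *
      exact le_csSup (vq_bdd hq hn) h
    omega

lemma vq_not_dvd {q n : ℕ} (hq : 2 ≤ q) (h : ¬ q ∣ n) : vq q n = 0 := by
  have hn : n ≠ 0 := by rintro rfl; exact h (dvd_zero q)
  exact vq_eq hq hn (by simpa using Nat.one_dvd n) (by simpa using h)

lemma vq_mul {q j : ℕ} (hq : 2 ≤ q) (hj : j ≠ 0) : vq q (q * j) = vq q j + 1 := by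
  obtain ⟨h1, h2⟩ := vq_spec hq hj
  have hq0 : q ≠ 0 := by omega
  refine vq_eq hq (by positivity) ?_ ?_
  · rw [pow_succ']; exact mul_dvd_mul_left q h1
  · intro h
    apply h2
    have : q * q ^ (vq q j + 1) ∣ q * j := by rw [← pow_succ']; exact h
    exact (mul_dvd_mul_iff_left (a := q) (by exact_mod_cast hq0)).mp this

lemma wq_succ (q n : ℕ) : wq q (n + 1) = wq q n + vq q (n + 1) := by
  rw [wq, wq, Finset.sum_range_succ]

lemma wq_rec {q : ℕ} (hq : 2 ≤ q) (n : ℕ) : wq q n = n / q + wq q (n / q) := by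
  induction n with
  | zero => simp [wq, vq]
  | succ n ih =>
    rw [wq_succ, ih, Nat.succ_div]
    by_cases h : q ∣ (n + 1)
    · obtain ⟨j, hj⟩ := h
      have hj0 : j ≠ 0 := by rintro rfl; omega
      have hdiv : (n + 1) / q = j := by rw [hj]; exact Nat.mul_div_cancel_left j (by omega)
      have hdiv' : n / q + 1 = j := by
        rw [← hdiv, Nat.succ_div, if_pos ⟨j, hj⟩]
      rw [if_pos ⟨j, hj⟩, hj, vq_mul hq hj0, wq_succ, hdiv']
      omega
    · rw [if_neg h, vq_not_dvd hq h]
      simp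

lemma wq_block {q : ℕ} (hq : 2 ≤ q) (a b : ℕ) (hb : b < q * q) :
    wq q (a * (q * q) + b) = a * q + b / q + a + wq q a := by
  have hq0 : 0 < q := by omega
  have h1 : (a * (q * q) + b) / q = a * q + b / q := by
    rw [← mul_assoc, mul_comm (a*q) q, Nat.mul_add_div hq0]
  have hbq : b / q < q := Nat.div_lt_of_lt_mul (by omega)
  have h2 : (a * q + b / q) / q = a := by
    rw [mul_comm a q, Nat.mul_add_div hq0, Nat.div_eq_of_lt hbq]
    omega
  rw [wq_rec hq (a * (q * q) + b), h1, wq_rec hq (a * q + b / q), h2]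
  omega

lemma count_block {q : ℕ} (hq : 2 ≤ q) (θ : ℤ) (z : ZMod q) :
    ((Finset.range (q*q)).filter
      (fun b => (θ : ZMod q) * ((b % q : ℕ) : ZMod q) + ((b / q : ℕ) : ZMod q) = z)).card = q := by
  haveI : NeZero q := ⟨by omega⟩
  have hq0 : 0 < q := by omega
  have key : (Finset.range (q*q)).filter
      (fun b => (θ : ZMod q) * ((b % q : ℕ) : ZMod q) + ((b / q : ℕ) : ZMod q) = z)
      = (Finset.range q).image (fun d : ℕ => (z - (θ : ZMod q) * (d : ZMod q)).val * q + d) := by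
    ext b
    simp only [Finset.mem_filter, Finset.mem_range, Finset.mem_image]
    constructor
    · rintro ⟨hb, hcond⟩
      refine ⟨b % q, Nat.mod_lt b hq0, ?_⟩
      have hdq : b / q < q := Nat.div_lt_of_lt_mul (by omega)
      have h1 : ((b / q : ℕ) : ZMod q) = z - (θ : ZMod q) * ((b % q : ℕ) : ZMod q) := by
        rw [← hcond]; ring
      have h2 : (z - (θ : ZMod q) * ((b % q : ℕ) : ZMod q)).val = b / q := by
        rw [← h1, ZMod.val_cast_of_lt hdq]
      rw [h2]
      exact Nat.div_add_mod' b q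
    · rintro ⟨d, hd, rfl⟩
      set v := (z - (θ : ZMod q) * (d : ZMod q)).val with hv
      have hvq : v < q := ZMod.val_lt _
      have hmod : (v * q + d) % q = d := by
        rw [Nat.mul_add_mod', Nat.mod_eq_of_lt hd]
      have hdiv : (v * q + d) / q = v := by
        rw [mul_comm v q, Nat.mul_add_div hq0, Nat.div_eq_of_lt hd]; omega
      refine ⟨by nlinarith, ?_⟩
      rw [hmod, hdiv, hv, ZMod.natCast_val, ZMod.cast_id]
      ring
  rw [key, Finset.card_image_of_injOn, Finset.card_range]
  intro d1 h1 d2 h2 heq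
  dsimp only at heq
  simp only [Finset.mem_coe, Finset.mem_range] at h1 h2
  have e1 : ((z - (θ : ZMod q) * d1).val * q + d1) % q = d1 := by
    rw [Nat.mul_add_mod', Nat.mod_eq_of_lt h1]
  have e2 : ((z - (θ : ZMod q) * d2).val * q + d2) % q = d2 := by
    rw [Nat.mul_add_mod', Nat.mod_eq_of_lt h2]
  rw [← e1, ← e2, heq]


lemma main_aux (q : ℕ) (hq : 2 ≤ q) (θ : ℤ) (x : ℤ) (P : ℕ → Prop) [DecidablePred P]
    (hPdef : ∀ n : ℕ, P n ↔ ((wq q n : ℤ) + θ * n) % (q : ℤ) = x % (q : ℤ)) :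
    Tendsto (fun N : ℕ => (((Finset.range N).filter P).card : ℝ) / N)
      atTop (nhds (1 / q)) := by
  haveI : NeZero q := ⟨by omega⟩
  have hq0 : 0 < q := by omega
  set Q := q * q with hQ
  have hQ0 : 0 < Q := by positivity
  have hPz : ∀ n : ℕ, P n ↔ (((wq q n : ℤ) + θ * n : ℤ) : ZMod q) = ((x : ℤ) : ZMod q) := by
    intro n
    rw [hPdef n]
    exact (ZMod.intCast_eq_intCast_iff _ _ _).symm
  -- value on blocks
  have hblockval : ∀ a b : ℕ, b < Q →
      ((((wq q (a * Q + b) : ℤ) + θ * ((a * Q + b : ℕ) : ℤ) : ℤ)) : ZMod q)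
        = (θ : ZMod q) * ((b % q : ℕ) : ZMod q) + ((b / q : ℕ) : ZMod q)
          + (((a : ZMod q) + (wq q a : ZMod q))) := by
    intro a b hb
    set u := b / q with hu
    set r := b % q with hr
    have hw : wq q (a * Q + b) = a * q + u + a + wq q a := wq_block hq a b hb
    have hbZ : (b : ℤ) = q * u + r := by
      have : b = q * u + r := by rw [hu, hr]; exact (Nat.div_add_mod b q).symm
      exact_mod_cast this
    have hX : (wq q (a * Q + b) : ℤ) + θ * ((a * Q + b : ℕ) : ℤ)
        = θ * (r : ℕ) + ((u : ℕ) : ℤ) + ((a : ℤ) + (wq q a : ℤ))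
          + q * (a + θ * a * q + θ * ((u : ℕ) : ℤ)) := by
      rw [hw]; push_cast [hQ]
      linear_combination θ * hbZ
    rw [hX]
    push_cast
    rw [ZMod.natCast_self]
    ring
  -- count on each block
  have hblock : ∀ a : ℕ,
      ((Finset.Ico (a * Q) (a * Q + Q)).filter P).card = q := by
    intro a
    have hmap : (Finset.Ico (a * Q) (a * Q + Q)).filter P
        = (((Finset.range Q).filter
            (fun b => (θ : ZMod q) * ((b % q : ℕ) : ZMod q) + ((b / q : ℕ) : ZMod q)
              = ((x : ℤ) : ZMod q) - ((a : ZMod q) + (wq q a : ZMod q)))).image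
            (fun b => a * Q + b)) := by
      ext n
      simp only [Finset.mem_filter, Finset.mem_Ico, Finset.mem_image, Finset.mem_range]
      constructor
      · rintro ⟨⟨h1, h2⟩, h3⟩
        refine ⟨n - a * Q, ⟨by omega, ?_⟩, by omega⟩
        have hn : n = a * Q + (n - a * Q) := by omega
        rw [hPz] at h3
        rw [hn, hblockval a _ (by omega)] at h3
        rw [eq_sub_iff_add_eq]
        exact h3
      · rintro ⟨b, ⟨hb, hcond⟩, rfl⟩
        refine ⟨⟨by omega, by omega⟩, ?_⟩
        rw [hPz, hblockval a b hb, hcond]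
        ring
    rw [hmap, Finset.card_image_of_injOn (fun b1 _ b2 _ h => by omega)]
    exact count_block hq θ _
  -- cumulative count
  have hcum : ∀ a : ℕ, ((Finset.range (a * Q)).filter P).card = a * q := by
    intro a
    induction a with
    | zero => simp
    | succ a ih =>
      have hstep : (a + 1) * Q = a * Q + Q := by ring
      have hsplit : Finset.range ((a + 1) * Q)
          = Finset.range (a * Q) ∪ Finset.Ico (a * Q) (a * Q + Q) := by
        rw [hstep, Finset.range_eq_Ico, Finset.range_eq_Ico,
          Finset.Ico_union_Ico_eq_Ico (by omega) (by omega)]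
      rw [hsplit, Finset.filter_union, Finset.card_union_of_disjoint, ih, hblock]
      · ring
      · refine Finset.disjoint_filter_filter ?_
        rw [Finset.range_eq_Ico]
        exact Finset.Ico_disjoint_Ico_consecutive 0 (a * Q) (a * Q + Q)
  -- bounds for general N
  have hbounds : ∀ N : ℕ, N / Q * q ≤ ((Finset.range N).filter P).card
      ∧ ((Finset.range N).filter P).card ≤ (N / Q + 1) * q := by
    intro N
    have h1 : Q * (N / Q) + N % Q = N := Nat.div_add_mod N Q
    have h2 : N % Q < Q := Nat.mod_lt _ hQ0
    have hmc : N / Q * Q = Q * (N / Q) := mul_comm _ _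
    have hlo : N / Q * Q ≤ N := by omega
    have hstep : (N / Q + 1) * Q = Q * (N / Q) + Q := by ring
    have hhi : N ≤ (N / Q + 1) * Q := by omega
    constructor
    · rw [← hcum (N / Q)]
      exact Finset.card_le_card (Finset.filter_subset_filter _
        (Finset.range_subset_range.mpr hlo))
    · rw [← hcum (N / Q + 1)]
      exact Finset.card_le_card (Finset.filter_subset_filter _
        (Finset.range_subset_range.mpr hhi))
  -- squeeze
  have hqR : (0:ℝ) < q := by exact_mod_cast hq0
  apply tendsto_of_tendsto_of_tendsto_of_le_of_le'
    (g := fun N : ℕ => 1 / (q:ℝ) - q / N) (h := fun N : ℕ => 1 / (q:ℝ) + q / N)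
  · have : Tendsto (fun N : ℕ => (q:ℝ) / N) atTop (nhds 0) :=
      tendsto_const_div_atTop_nhds_zero_nat (q:ℝ)
    simpa using (tendsto_const_nhds (x := 1 / (q:ℝ))).sub this
  · have : Tendsto (fun N : ℕ => (q:ℝ) / N) atTop (nhds 0) :=
      tendsto_const_div_atTop_nhds_zero_nat (q:ℝ)
    simpa using (tendsto_const_nhds (x := 1 / (q:ℝ))).add this
  · filter_upwards [eventually_ge_atTop 1] with N hN
    have hNR : (0:ℝ) < N := by exact_mod_cast hN
    have hA : (↑(N / Q) : ℝ) * q ≤ (((Finset.range N).filter P).card : ℝ) := by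
      exact_mod_cast (hbounds N).1
    have h1 : Q * (N / Q) + N % Q = N := Nat.div_add_mod N Q
    have h2 : N % Q < Q := Nat.mod_lt _ hQ0
    have hB : (N:ℝ) - q * q ≤ (q:ℝ) * q * (↑(N / Q) : ℝ) := by
      have hn : N ≤ Q * (N / Q) + Q := by omega
      have hn' : (N:ℝ) ≤ (Q:ℝ) * (↑(N / Q) : ℝ) + Q := by exact_mod_cast hn
      have hQR : (Q:ℝ) = q * q := by exact_mod_cast hQ
      nlinarith
    have key : (N:ℝ) - q * q ≤ (((Finset.range N).filter P).card : ℝ) * q := by nlinarith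
    rw [div_sub_div _ _ (ne_of_gt hqR) (ne_of_gt hNR), div_le_div_iff₀ (by positivity) hNR]
    nlinarith [mul_le_mul_of_nonneg_right key hNR.le]
  · filter_upwards [eventually_ge_atTop 1] with N hN
    have hNR : (0:ℝ) < N := by exact_mod_cast hN
    have hA : (((Finset.range N).filter P).card : ℝ) ≤ (↑(N / Q) : ℝ) * q + q := by
      have h := (hbounds N).2
      have h' : (((Finset.range N).filter P).card : ℝ) ≤ ((N / Q + 1) * q : ℕ) := by exact_mod_cast h
      push_cast at h'
      nlinarith
    have h1 : Q * (N / Q) + N % Q = N := Nat.div_add_mod N Q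
    have hB : (q:ℝ) * q * (↑(N / Q) : ℝ) ≤ N := by
      have hn : Q * (N / Q) ≤ N := by omega
      have hn' : (Q:ℝ) * (↑(N / Q) : ℝ) ≤ N := by exact_mod_cast hn
      have hQR : (Q:ℝ) = q * q := by exact_mod_cast hQ
      nlinarith
    have key : (((Finset.range N).filter P).card : ℝ) * q ≤ (N:ℝ) + q * q := by nlinarith
    rw [div_add_div _ _ (ne_of_gt hqR) hNR.ne', div_le_div_iff₀ hNR (by positivity)]
    nlinarith [mul_le_mul_of_nonneg_right key hNR.le]

theorem stmt_12 (q : ℕ) (hq : 2 ≤ q) (θ : ℤ)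
    (hθ : Int.gcd θ (q : ℤ) = 1 ∨ (q : ℤ) ∣ θ) (x : ℤ) :
    Tendsto
      (fun N : ℕ =>
        (((Finset.range N).filter fun n =>
            ((wq q n : ℤ) + θ * n) % (q : ℤ) = x % (q : ℤ)).card : ℝ) / N)
      atTop (nhds (1 / q)) := by
  exact main_aux q hq θ x _ (fun n => Iff.rfl)
end

section
/- Let q be an integer and for λ ∈ ℤ let N_λ be the 3×3 integer matrix with rows (1, 1, 0), (0, q, λ), (0, 0, 1). Then for every k ≥ 1, all integers λ_1, …, λ_k, and all integers ψ, θ, x, the row vector (ψ, θ, x)·N_{λ_1}·N_{λ_2}⋯N_{λ_k} equals (ψ, q^k·θ + (Σ_{i=0}^{k−1} q^i)·ψ, x + Σ_{j=1}^{k} λ_j·(q^{j−1}·θ + (Σ_{i=0}^{j−2} q^i)·ψ)), where the inner sum Σ_{i=0}^{j−2} q^i is 0 when j = 1. -/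
/-- The 3×3 integer matrix with rows `(1, 1, 0)`, `(0, q, λ)`, `(0, 0, 1)`. -/
def Nmat (q lam : ℤ) : Matrix (Fin 3) (Fin 3) ℤ :=
  !![1, 1, 0; 0, q, lam; 0, 0, 1]

lemma step_Nmat (q l ψ θ x : ℤ) :
    Matrix.vecMul ![ψ, θ, x] (Nmat q l) = ![ψ, ψ + q * θ, x + l * θ] := by
  simp [Nmat, Matrix.cons_vecMul, Matrix.vecMul_cons]
  constructor <;> ring

lemma aux_Nmat (q : ℤ) (k : ℕ) (lam : Fin k → ℤ) (ψ θ x : ℤ) :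
    Matrix.vecMul ![ψ, θ, x] (List.ofFn fun j : Fin k => Nmat q (lam j)).prod =
      ![ψ,
        q ^ k * θ + (∑ i ∈ Finset.range k, q ^ i) * ψ,
        x + ∑ j : Fin k,
          lam j * (q ^ (j : ℕ) * θ + (∑ i ∈ Finset.range (j : ℕ), q ^ i) * ψ)] := by
  induction k generalizing ψ θ x with
  | zero =>
    funext i
    fin_cases i <;> simp
  | succ n ih =>
    rw [List.ofFn_succ, List.prod_cons, ← Matrix.vecMul_vecMul, step_Nmat, ih]
    funext i
    fin_cases i
    · rfl
    · simp only [Fin.mk_one, Matrix.cons_val_one, Matrix.head_cons, Matrix.cons_val_zero]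
      rw [Finset.sum_range_succ]
      ring
    · simp only [show (⟨2, by omega⟩ : Fin 3) = 2 from rfl, Matrix.cons_val_two, Matrix.tail_cons, Matrix.head_cons]
      rw [Fin.sum_univ_succ]
      have h : ∀ j : Fin n,
          lam j.succ * (q ^ (j : ℕ) * (ψ + q * θ) +
              (∑ i ∈ Finset.range (j : ℕ), q ^ i) * ψ) =
          lam j.succ * (q ^ ((j.succ : Fin (n+1)) : ℕ) * θ +
              (∑ i ∈ Finset.range ((j.succ : Fin (n+1)) : ℕ), q ^ i) * ψ) := by
        intro j
        simp only [Fin.val_succ, Finset.sum_range_succ, pow_succ]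
        ring
      rw [Finset.sum_congr rfl (fun j _ => h j)]
      simp only [Fin.val_zero, pow_zero, Finset.range_zero, Finset.sum_empty]
      ring

theorem stmt_16 (q : ℤ) (k : ℕ) (hk : 1 ≤ k) (lam : Fin k → ℤ) (ψ θ x : ℤ) :
    Matrix.vecMul ![ψ, θ, x] (List.ofFn fun j : Fin k => Nmat q (lam j)).prod =
      ![ψ,
        q ^ k * θ + (∑ i ∈ Finset.range k, q ^ i) * ψ,
        x + ∑ j : Fin k,
          lam j * (q ^ (j : ℕ) * θ + (∑ i ∈ Finset.range (j : ℕ), q ^ i) * ψ)] :=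
  aux_Nmat q k lam ψ θ x
end
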